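/- Let E_1, …, E_m be Banach spaces and let F be a Banach lattice. The set of all L-weakly compact m-linear operators, that is, all continuous m-linear operators A : E_1 × ⋯ × E_m → F such that A(B), where B is the closed unit ball of E_1 × ⋯ × E_m with the maximum norm, is an L-weakly compact subset of F, is a closed linear subspace of L(E_1,…,E_m;F). -/

import Mathlib

open Filter Topology Bornology

/-- A norm bounded subset `A` of a Banach lattice is L-weakly compact if every disjoint
sequence in `sol(A) = {x : |x| ≤ |y| for some y ∈ A}` is norm null. -/
def IsLWeaklyCompactSet' {F : Type*} [NormedAddCommGroup F] [Lattice F] [IsOrderedAddMonoid F] [HasSolidNorm F] (A : Set F) : Prop :=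
  IsBounded A ∧
    ∀ x : ℕ → F, (∀ n, ∃ y ∈ A, |x n| ≤ |y|) →
      (∀ i j, i ≠ j → |x i| ⊓ |x j| = 0) →
      Tendsto (fun n => ‖x n‖) atTop (nhds 0)

/-- The set of L-weakly compact `m`-linear operators from Banach spaces `E₁, …, E_m` to a
Banach lattice `F`: the image of the closed unit ball of `E₁ × ⋯ × E_m` (maximum norm) is an
L-weakly compact subset of `F`. -/
def LWeaklyCompactMultilinear {m : ℕ} (E : Fin m → Type*) (F : Type*)
    [∀ i, NormedAddCommGroup (E i)] [∀ i, NormedSpace ℝ (E i)]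
    [NormedAddCommGroup F] [Lattice F] [IsOrderedAddMonoid F] [HasSolidNorm F] [NormedSpace ℝ F] :
    Set (ContinuousMultilinearMap ℝ E F) :=
  {A | IsLWeaklyCompactSet' (⇑A '' Metric.closedBall (0 : ∀ i, E i) 1)}

section Helpers

variable {F : Type*} [NormedAddCommGroup F] [Lattice F] [IsOrderedAddMonoid F] [HasSolidNorm F] [NormedSpace ℝ F]

private lemma pow2_semiclosed : ∀ (n : ℕ) (a : F), 0 ≤ 2 ^ n • a → 0 ≤ a := by
  intro n
  induction n with
  | zero => intro a h; simpa using h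
  | succ n ih =>
    intro a h
    rw [pow_succ, mul_smul] at h
    exact nsmul_two_semiclosed (ih _ h)

private lemma real_smul_nonneg {c : ℝ} (hc : 0 ≤ c) {y : F} (hy : 0 ≤ y) : 0 ≤ c • y := by
  have key : ∀ n : ℕ, 0 ≤ ((⌊c * 2 ^ n⌋₊ : ℝ) / 2 ^ n) • y := by
    intro n
    apply pow2_semiclosed (F := F) n
    have hsm : (2 ^ n : ℕ) • (((⌊c * 2 ^ n⌋₊ : ℝ) / 2 ^ n) • y) = (⌊c * 2 ^ n⌋₊ : ℕ) • y := by
      rw [← Nat.cast_smul_eq_nsmul ℝ (2 ^ n), ← Nat.cast_smul_eq_nsmul ℝ (⌊c * 2 ^ n⌋₊),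
        smul_smul]
      congr 1
      push_cast
      field_simp
    rw [hsm]
    exact nsmul_nonneg hy _
  have lim : Tendsto (fun n : ℕ => ((⌊c * 2 ^ n⌋₊ : ℝ) / 2 ^ n) • y) atTop (nhds (c • y)) := by
    apply Tendsto.smul_const
    have hsub : Tendsto (fun n : ℕ => ((⌊c * 2 ^ n⌋₊ : ℝ) / 2 ^ n) - c) atTop (nhds 0) := by
      apply squeeze_zero_norm (a := fun n : ℕ => (1 / 2 : ℝ) ^ n)
      · intro n
        have h2 : (0 : ℝ) < 2 ^ n := by positivity
        have e1 : ((⌊c * 2 ^ n⌋₊ : ℝ)) ≤ c * 2 ^ n := Nat.floor_le (by positivity)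
        have e2 : c * 2 ^ n - 1 ≤ (⌊c * 2 ^ n⌋₊ : ℝ) := by
          have := Nat.lt_floor_add_one (c * 2 ^ n)
          linarith
        have hq : (1 / 2 : ℝ) ^ n = 1 / 2 ^ n := by rw [div_pow, one_pow]
        have heq : (⌊c * 2 ^ n⌋₊ : ℝ) / 2 ^ n - c = ((⌊c * 2 ^ n⌋₊ : ℝ) - c * 2 ^ n) / 2 ^ n := by
          field_simp
        rw [Real.norm_eq_abs, heq, abs_le]
        constructor
        · rw [hq, ← neg_div]
          exact (div_le_div_iff_of_pos_right h2).mpr (by linarith)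
        · rw [hq]
          exact (div_le_div_iff_of_pos_right h2).mpr (by linarith)
      · exact tendsto_pow_atTop_nhds_zero_of_lt_one (by norm_num) (by norm_num)
    have := hsub.add_const c
    simpa using this
  exact isClosed_nonneg.mem_of_tendsto lim (Eventually.of_forall key)

private lemma real_smul_mono {c : ℝ} (hc : 0 ≤ c) {a b : F} (h : a ≤ b) : c • a ≤ c • b := by
  have := real_smul_nonneg hc (sub_nonneg.2 h)
  rw [smul_sub] at this
  exact sub_nonneg.mp this

private lemma abs_le_zero' {a : F} (h : |a| ≤ 0) : a = 0 := by
  have h1 : a ≤ 0 := le_trans (le_abs_self a) h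
  have h2 : -a ≤ 0 := le_trans (neg_le_abs a) h
  exact le_antisymm h1 (neg_nonpos.mp h2)

/-- Scalar multiplication by a positive real as an order isomorphism. -/
private noncomputable def smulIso (c : ℝ) (hc : 0 < c) : F ≃o F :=
  { toFun := (c • ·)
    invFun := (c⁻¹ • ·)
    left_inv := fun x => inv_smul_smul₀ hc.ne' x
    right_inv := fun x => smul_inv_smul₀ hc.ne' x
    map_rel_iff' := by
      intro a b
      constructor
      · intro h
        have h' : c • a ≤ c • b := h
        have h2 := real_smul_mono (inv_nonneg.2 hc.le) h'
        rwa [inv_smul_smul₀ hc.ne', inv_smul_smul₀ hc.ne'] at h2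
      · intro h
        exact real_smul_mono hc.le h }

private lemma real_smul_sup {c : ℝ} (hc : 0 < c) (a b : F) :
    c • (a ⊔ b) = (c • a) ⊔ (c • b) :=
  (smulIso c hc).map_sup a b

private lemma real_smul_inf {c : ℝ} (hc : 0 < c) (a b : F) :
    c • (a ⊓ b) = (c • a) ⊓ (c • b) :=
  (smulIso c hc).map_inf a b

private lemma abs_real_smul_nonneg {c : ℝ} (hc : 0 ≤ c) (y : F) : |c • y| = c • |y| := by
  rcases hc.eq_or_lt with rfl | hc
  · simp
  · show (c • y) ⊔ -(c • y) = c • (y ⊔ -y)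
    rw [real_smul_sup hc, smul_neg]

private lemma abs_real_smul (c : ℝ) (y : F) : |c • y| = |c| • |y| := by
  rcases le_or_gt 0 c with hc | hc
  · rw [abs_of_nonneg hc, abs_real_smul_nonneg hc]
  · rw [abs_of_neg hc, ← neg_smul_neg, abs_real_smul_nonneg (by linarith), abs_neg]

/-- Riesz-type decomposition used for sums. -/
private lemma split_abs {x a b : F} (hab : |x| ≤ a + b) (ha : 0 ≤ a) (hb : 0 ≤ b) :
    ∃ u w : F, 0 ≤ u ∧ 0 ≤ w ∧ u ≤ a ∧ w ≤ b ∧ u ≤ |x| ∧ w ≤ |x| ∧ |x| = u + w := by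
  refine ⟨|x| ⊓ a, |x| - |x| ⊓ a, le_inf (abs_nonneg x) ha,
    sub_nonneg.2 inf_le_left, inf_le_right, ?_, inf_le_left,
    sub_le_self _ (le_inf (abs_nonneg x) ha), by abel⟩
  rw [sub_inf]
  apply sup_le
  · rw [sub_self]; exact hb
  · rw [sub_le_iff_le_add]
    rwa [add_comm]

private lemma norm_apply_le_of_mem_ball {m : ℕ} {E : Fin m → Type*}
    [∀ i, NormedAddCommGroup (E i)] [∀ i, NormedSpace ℝ (E i)]
    (A : ContinuousMultilinearMap ℝ E F) {v : ∀ i, E i}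
    (hv : v ∈ Metric.closedBall (0 : ∀ i, E i) 1) : ‖A v‖ ≤ ‖A‖ := by
  have hv1 : ‖v‖ ≤ 1 := by simpa [Metric.mem_closedBall, dist_zero_right] using hv
  have hv' : ∀ i, ‖v i‖ ≤ 1 := fun i => (norm_le_pi_norm v i).trans hv1
  calc ‖A v‖ ≤ ‖A‖ * ∏ i, ‖v i‖ := A.le_opNorm v
    _ ≤ ‖A‖ * 1 := by
        apply mul_le_mul_of_nonneg_left ?_ (norm_nonneg A)
        exact Finset.prod_le_one (fun i _ => norm_nonneg _) (fun i _ => hv' i)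
    _ = ‖A‖ := mul_one _

private lemma bdd_image {m : ℕ} {E : Fin m → Type*}
    [∀ i, NormedAddCommGroup (E i)] [∀ i, NormedSpace ℝ (E i)]
    (A : ContinuousMultilinearMap ℝ E F) :
    IsBounded (⇑A '' Metric.closedBall (0 : ∀ i, E i) 1) := by
  rw [isBounded_iff_forall_norm_le]
  refine ⟨‖A‖, ?_⟩
  rintro _ ⟨v, hv, rfl⟩
  exact norm_apply_le_of_mem_ball A hv

end Helpers

/-- For Banach spaces `E₁, …, E_m` and a Banach lattice `F`, the set of L-weakly compact
`m`-linear operators is a closed linear subspace of `L(E₁,…,E_m;F)`. -/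
theorem stmt6 {m : ℕ} (E : Fin m → Type*) (F : Type*)
    [∀ i, NormedAddCommGroup (E i)] [∀ i, NormedSpace ℝ (E i)] [∀ i, CompleteSpace (E i)]
    [NormedAddCommGroup F] [Lattice F] [IsOrderedAddMonoid F] [HasSolidNorm F] [NormedSpace ℝ F] [CompleteSpace F] :
    IsClosed (LWeaklyCompactMultilinear E F) ∧
      (0 : ContinuousMultilinearMap ℝ E F) ∈ LWeaklyCompactMultilinear E F ∧
      (∀ A₁ ∈ LWeaklyCompactMultilinear E F, ∀ A₂ ∈ LWeaklyCompactMultilinear E F,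
        A₁ + A₂ ∈ LWeaklyCompactMultilinear E F) ∧
      (∀ (c : ℝ), ∀ A ∈ LWeaklyCompactMultilinear E F,
        c • A ∈ LWeaklyCompactMultilinear E F) := by
  refine ⟨?_, ?_, ?_, ?_⟩
  · -- closedness
    apply isClosed_of_closure_subset
    intro A hA
    obtain ⟨g, hg_mem, hg_lim⟩ := mem_closure_iff_seq_limit.1 hA
    refine ⟨bdd_image _, ?_⟩
    intro x hx hdisj
    choose y hy hle using hx
    choose v hv heq using hy
    rw [NormedAddCommGroup.tendsto_nhds_zero]
    intro ε hε
    obtain ⟨k, hk⟩ : ∃ k, ‖A - g k‖ < ε / 2 := by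
      obtain ⟨N, hN⟩ := Metric.tendsto_atTop.1 hg_lim (ε / 2) (by positivity)
      refine ⟨N, ?_⟩
      rw [norm_sub_rev]
      simpa [dist_eq_norm] using hN N le_rfl
    obtain ⟨hbk, hk2⟩ := hg_mem k
    have hle' : ∀ n, |x n| ≤ |g k (v n)| + |(A - g k) (v n)| := by
      intro n
      have h0 : |x n| ≤ |A (v n)| := heq n ▸ hle n
      refine h0.trans ?_
      have hAv : A (v n) = g k (v n) + (A - g k) (v n) := by
        rw [ContinuousMultilinearMap.sub_apply]; abel
      rw [hAv]
      exact abs_add_le _ _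
    have H := fun n => split_abs (hle' n) (abs_nonneg _) (abs_nonneg _)
    choose u w hu0 hw0 hua hwb hux hwx hxuw using H
    have hdis_u : ∀ i j, i ≠ j → |u i| ⊓ |u j| = 0 := by
      intro i j hij
      rw [abs_of_nonneg (hu0 i), abs_of_nonneg (hu0 j)]
      refine le_antisymm ?_ (le_inf (hu0 i) (hu0 j))
      calc u i ⊓ u j ≤ |x i| ⊓ |x j| := inf_le_inf (hux i) (hux j)
        _ = 0 := hdisj i j hij
    have tu := hk2 u (fun n => ⟨g k (v n), ⟨v n, hv n, rfl⟩, by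
      rw [abs_of_nonneg (hu0 n)]; exact hua n⟩) hdis_u
    have hw_bound : ∀ n, ‖w n‖ ≤ ε / 2 := by
      intro n
      have h1 : ‖w n‖ ≤ ‖(A - g k) (v n)‖ :=
        HasSolidNorm.solid (by rw [abs_of_nonneg (hw0 n)]; exact hwb n)
      have h2 := norm_apply_le_of_mem_ball (A - g k) (hv n)
      linarith
    filter_upwards [tu.eventually (gt_mem_nhds (show (0 : ℝ) < ε / 2 by positivity))] with n hn
    have hxn : ‖x n‖ ≤ ‖u n‖ + ‖w n‖ := by
      rw [← norm_abs_eq_norm (x n), hxuw n]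
      exact norm_add_le _ _
    have : ‖x n‖ < ε := by
      have := hw_bound n
      linarith
    simpa [abs_of_nonneg (norm_nonneg (x n))] using this
  · -- zero
    refine ⟨bdd_image _, ?_⟩
    intro x hx _
    have hx0 : ∀ n, x n = 0 := by
      intro n
      obtain ⟨y, ⟨v, hv, rfl⟩, hle⟩ := hx n
      rw [show (0 : ContinuousMultilinearMap ℝ E F) v = 0 from rfl, abs_zero] at hle
      exact abs_le_zero' hle
    simp only [hx0, norm_zero]
    exact tendsto_const_nhds
  · -- addition
    rintro A₁ ⟨hb₁, h₁⟩ A₂ ⟨hb₂, h₂⟩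
    refine ⟨bdd_image _, ?_⟩
    intro x hx hdisj
    choose y hy hle using hx
    choose v hv heq using hy
    have hle' : ∀ n, |x n| ≤ |A₁ (v n)| + |A₂ (v n)| := by
      intro n
      have h0 : |x n| ≤ |(A₁ + A₂) (v n)| := heq n ▸ hle n
      refine h0.trans ?_
      rw [ContinuousMultilinearMap.add_apply]
      exact abs_add_le _ _
    have H := fun n => split_abs (hle' n) (abs_nonneg _) (abs_nonneg _)
    choose u w hu0 hw0 hua hwb hux hwx hxuw using H
    have hdis_u : ∀ i j, i ≠ j → |u i| ⊓ |u j| = 0 := by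
      intro i j hij
      rw [abs_of_nonneg (hu0 i), abs_of_nonneg (hu0 j)]
      refine le_antisymm ?_ (le_inf (hu0 i) (hu0 j))
      calc u i ⊓ u j ≤ |x i| ⊓ |x j| := inf_le_inf (hux i) (hux j)
        _ = 0 := hdisj i j hij
    have hdis_w : ∀ i j, i ≠ j → |w i| ⊓ |w j| = 0 := by
      intro i j hij
      rw [abs_of_nonneg (hw0 i), abs_of_nonneg (hw0 j)]
      refine le_antisymm ?_ (le_inf (hw0 i) (hw0 j))
      calc w i ⊓ w j ≤ |x i| ⊓ |x j| := inf_le_inf (hwx i) (hwx j)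
        _ = 0 := hdisj i j hij
    have tu := h₁ u (fun n => ⟨A₁ (v n), ⟨v n, hv n, rfl⟩, by
      rw [abs_of_nonneg (hu0 n)]; exact hua n⟩) hdis_u
    have tw := h₂ w (fun n => ⟨A₂ (v n), ⟨v n, hv n, rfl⟩, by
      rw [abs_of_nonneg (hw0 n)]; exact hwb n⟩) hdis_w
    refine squeeze_zero (fun n => norm_nonneg _) (fun n => ?_) (by simpa using tu.add tw)
    rw [← norm_abs_eq_norm (x n), hxuw n]
    exact norm_add_le _ _
  · -- scalar multiplication
    rintro c A ⟨hbA, hA⟩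
    refine ⟨bdd_image _, ?_⟩
    rcases eq_or_ne c 0 with rfl | hc
    · intro x hx _
      have hx0 : ∀ n, x n = 0 := by
        intro n
        obtain ⟨y, ⟨v, hv, rfl⟩, hle⟩ := hx n
        rw [show ((0 : ℝ) • A) v = (0 : ℝ) • A v from rfl, zero_smul, abs_zero] at hle
        exact abs_le_zero' hle
      simp only [hx0, norm_zero]
      exact tendsto_const_nhds
    · intro x hx hdisj
      have habs : (0 : ℝ) < |c| := abs_pos.2 hc
      set z : ℕ → F := fun n => |c|⁻¹ • x n with hz
      have hzabs : ∀ n, |z n| = |c|⁻¹ • |x n| := by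
        intro n
        rw [hz]
        simp only
        rw [abs_real_smul, abs_of_nonneg (inv_nonneg.2 habs.le)]
      have hz_sol : ∀ n, ∃ y ∈ ⇑A '' Metric.closedBall (0 : ∀ i, E i) 1, |z n| ≤ |y| := by
        intro n
        obtain ⟨y, ⟨v, hv, rfl⟩, hle⟩ := hx n
        refine ⟨A v, ⟨v, hv, rfl⟩, ?_⟩
        have h2 : |x n| ≤ |c| • |A v| := by
          have h3 : |(c • A) v| = |c| • |A v| := by
            rw [ContinuousMultilinearMap.smul_apply, abs_real_smul]
          exact h3 ▸ hle
        rw [hzabs n]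
        calc |c|⁻¹ • |x n| ≤ |c|⁻¹ • (|c| • |A v|) :=
              real_smul_mono (inv_nonneg.2 habs.le) h2
          _ = |A v| := inv_smul_smul₀ habs.ne' _
      have hz_disj : ∀ i j, i ≠ j → |z i| ⊓ |z j| = 0 := by
        intro i j hij
        rw [hzabs i, hzabs j, ← real_smul_inf (inv_pos.2 habs), hdisj i j hij, smul_zero]
      have ht := hA z hz_sol hz_disj
      have ht2 : Tendsto (fun n => |c| * ‖z n‖) atTop (nhds 0) := by
        simpa using ht.const_mul |c|
      refine Tendsto.congr (fun n => ?_) ht2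
      rw [hz]
      simp only
      rw [norm_smul, Real.norm_eq_abs, abs_inv, abs_abs, ← mul_assoc,
        mul_inv_cancel₀ habs.ne', one_mul]
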